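/- Let T : I → I be a Borel measurable map of a compact interval I, let ζ ∈ I be a periodic point of T of period p ≥ 1 such that T^p restricted to some neighbourhood of ζ is a C¹ diffeomorphism onto its image with |(T^p)′(ζ)| > 1, and let μ be a T-invariant Borel probability measure on I, absolutely continuous with respect to Lebesgue measure, whose density has a version that is continuous and strictly positive at ζ. Set θ = 1 − |(T^p)′(ζ)|^{−1} ∈ (0,1), and let (B_n) be open balls centred at ζ with radii tending to 0. Then for every k ≥ 0, μ(Q_k(B_n))/μ(B_n) → θ(1−θ)^k as n → ∞; in particular the extremal index lim_n μ(Q(B_n))/μ(B_n) equals 1 − |(T^p)′(ζ)|^{−1}. -/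

import Mathlib

open MeasureTheory Filter Set ProbabilityTheory
open scoped ENNReal Topology

noncomputable section

variable {X : Type*}

/-- `U_0(B) = B` and `U_{k+1}(B) = T^{-p}(U_k(B)) ∩ B`. -/
def Uset (T : X → X) (p : ℕ) (B : Set X) : ℕ → Set X
  | 0 => B
  | (k+1) => (T^[p]) ⁻¹' (Uset T p B k) ∩ B

/-- The annuli: `Q_0(B) = B ∩ T^{-p}(Bᶜ)` and `Q_{k+1}(B) = T^{-p}(Q_k(B)) ∩ B`. -/
def Qann (T : X → X) (p : ℕ) (B : Set X) : ℕ → Set X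
  | 0 => B ∩ (T^[p]) ⁻¹' Bᶜ
  | (k+1) => (T^[p]) ⁻¹' (Qann T p B k) ∩ B

/-- The entrance set `E(B) = T^{-p}(B) ∖ B`. -/
def Eset (T : X → X) (p : ℕ) (B : Set X) : Set X := (T^[p]) ⁻¹' B \ B

end

section Aux
variable {X : Type*}

lemma Qann_eq_diff (T : X → X) (p : ℕ) (B : Set X) :
    ∀ k, Qann T p B k = Uset T p B k \ Uset T p B (k+1) := by
  intro k
  induction k with
  | zero => ext x; simp only [Qann, Uset, Set.mem_inter_iff, Set.mem_preimage,
      Set.mem_compl_iff, Set.mem_diff]; tauto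
  | succ k ih =>
    ext x
    simp only [Qann, Uset, ih, Set.mem_inter_iff, Set.mem_preimage, Set.mem_diff]
    tauto

lemma Uset_subset_ball (T : ℝ → ℝ) (p : ℕ) (ζ δ rr c : ℝ) (hc : 0 < c)
    (hrδ : rr ≤ δ)
    (hlow : ∀ x ∈ Metric.ball ζ δ, c * |x - ζ| ≤ |T^[p] x - ζ|) :
    ∀ k, Uset T p (Metric.ball ζ rr) k ⊆ Metric.ball ζ (rr * (c⁻¹) ^ k) := by
  intro k
  induction k with
  | zero => simp [Uset]
  | succ k ih =>
    intro x hx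
    obtain ⟨hx1, hx2⟩ := hx
    have hxδ : x ∈ Metric.ball ζ δ := Metric.ball_subset_ball hrδ hx2
    have h2 : |T^[p] x - ζ| < rr * (c⁻¹) ^ k := by
      simpa [Metric.mem_ball, Real.dist_eq] using ih hx1
    have h3 : c * |x - ζ| < rr * (c⁻¹) ^ k := lt_of_le_of_lt (hlow x hxδ) h2
    have key : c * (rr * (c⁻¹) ^ (k+1)) = rr * (c⁻¹) ^ k := by
      rw [pow_succ, mul_comm c, mul_assoc, mul_assoc, inv_mul_cancel₀ hc.ne', mul_one]
    rw [← key] at h3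
    have h4 : |x - ζ| < rr * (c⁻¹) ^ (k+1) := lt_of_mul_lt_mul_left h3 (le_of_lt hc)
    simpa [Metric.mem_ball, Real.dist_eq] using h4

lemma ball_subset_Uset (T : ℝ → ℝ) (p : ℕ) (ζ δ rr c : ℝ) (hc : 1 ≤ c)
    (hr : 0 ≤ rr) (hrδ : rr ≤ δ)
    (hup : ∀ x ∈ Metric.ball ζ δ, |T^[p] x - ζ| ≤ c * |x - ζ|) :
    ∀ k, Metric.ball ζ (rr * (c⁻¹) ^ k) ⊆ Uset T p (Metric.ball ζ rr) k := by
  have hc0 : 0 < c := lt_of_lt_of_le one_pos hc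
  intro k
  induction k with
  | zero => simp [Uset]
  | succ k ih =>
    intro x hx
    have hrad : rr * (c⁻¹) ^ (k+1) ≤ rr := by
      have h1 : (c⁻¹) ^ (k+1) ≤ 1 :=
        pow_le_one₀ (inv_nonneg.2 hc0.le) (inv_le_one_of_one_le₀ hc)
      calc rr * (c⁻¹) ^ (k+1) ≤ rr * 1 := mul_le_mul_of_nonneg_left h1 hr
        _ = rr := mul_one rr
    have hxr : x ∈ Metric.ball ζ rr := Metric.ball_subset_ball hrad hx
    refine ⟨?_, hxr⟩
    have hxδ : x ∈ Metric.ball ζ δ := Metric.ball_subset_ball hrδ hxr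
    have h2 : |x - ζ| < rr * (c⁻¹) ^ (k+1) := by
      simpa [Metric.mem_ball, Real.dist_eq] using hx
    have key : c * (rr * (c⁻¹) ^ (k+1)) = rr * (c⁻¹) ^ k := by
      rw [pow_succ, mul_comm c, mul_assoc, mul_assoc, inv_mul_cancel₀ hc0.ne', mul_one]
    have h3 : |T^[p] x - ζ| < rr * (c⁻¹) ^ k := by
      calc |T^[p] x - ζ| ≤ c * |x - ζ| := hup x hxδ
        _ < c * (rr * (c⁻¹) ^ (k+1)) := mul_lt_mul_of_pos_left h2 hc0
        _ = rr * (c⁻¹) ^ k := key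
    exact ih (by simpa [Metric.mem_ball, Real.dist_eq] using h3)

lemma mvt_lower (S : ℝ → ℝ) (ζ δ : ℝ) (hfix : S ζ = ζ)
    (hdiff : ∀ x ∈ Metric.ball ζ δ, DifferentiableAt ℝ S x)
    (lo : ℝ) (hbd : ∀ x ∈ Metric.ball ζ δ, lo ≤ |deriv S x|) :
    ∀ x ∈ Metric.ball ζ δ, lo * |x - ζ| ≤ |S x - ζ| := by
  intro x hx
  rcases lt_trichotomy x ζ with h | h | h
  · have hsub : Set.Icc x ζ ⊆ Metric.ball ζ δ := by
      intro y hy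
      rw [Metric.mem_ball, Real.dist_eq]
      rw [Metric.mem_ball, Real.dist_eq] at hx
      rw [abs_sub_comm]
      calc |ζ - y| = ζ - y := abs_of_nonneg (by linarith [hy.2])
        _ ≤ ζ - x := by linarith [hy.1]
        _ = |x - ζ| := by rw [abs_sub_comm]; exact (abs_of_nonneg (by linarith)).symm
        _ < δ := hx
    obtain ⟨c, hc, hceq⟩ := exists_deriv_eq_slope S h
      (fun y hy => (hdiff y (hsub hy)).continuousAt.continuousWithinAt)
      (fun y hy => (hdiff y (hsub (Set.Ioo_subset_Icc_self hy))).differentiableWithinAt)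
    have hcball : c ∈ Metric.ball ζ δ := hsub (Set.Ioo_subset_Icc_self hc)
    have heq : |S ζ - S x| = |deriv S c| * |ζ - x| := by
      rw [hceq, abs_div, div_mul_cancel₀]
      exact abs_ne_zero.2 (by linarith)
    rw [hfix] at heq
    rw [abs_sub_comm x ζ, abs_sub_comm (S x) ζ, heq]
    exact mul_le_mul_of_nonneg_right (hbd c hcball) (abs_nonneg _)
  · simp [h, hfix]
  · have hsub : Set.Icc ζ x ⊆ Metric.ball ζ δ := by
      intro y hy
      rw [Metric.mem_ball, Real.dist_eq]
      rw [Metric.mem_ball, Real.dist_eq] at hx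
      calc |y - ζ| = y - ζ := abs_of_nonneg (by linarith [hy.1])
        _ ≤ x - ζ := by linarith [hy.2]
        _ = |x - ζ| := (abs_of_nonneg (by linarith)).symm
        _ < δ := hx
    obtain ⟨c, hc, hceq⟩ := exists_deriv_eq_slope S h
      (fun y hy => (hdiff y (hsub hy)).continuousAt.continuousWithinAt)
      (fun y hy => (hdiff y (hsub (Set.Ioo_subset_Icc_self hy))).differentiableWithinAt)
    have hcball : c ∈ Metric.ball ζ δ := hsub (Set.Ioo_subset_Icc_self hc)
    have heq : |S x - S ζ| = |deriv S c| * |x - ζ| := by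
      rw [hceq, abs_div, div_mul_cancel₀]
      exact abs_ne_zero.2 (by linarith)
    rw [hfix] at heq
    rw [heq]
    exact mul_le_mul_of_nonneg_right (hbd c hcball) (abs_nonneg _)

lemma density_bounds (μ : Measure ℝ) (ρ : ℝ → ℝ)
    (hρ : μ = MeasureTheory.volume.withDensity (fun x => ENNReal.ofReal (ρ x)))
    (ζ δ e' : ℝ) (he' : 0 ≤ e') (hpos : 0 ≤ ρ ζ - e')
    (hbd : ∀ x ∈ Metric.ball ζ δ, ρ ζ - e' ≤ ρ x ∧ ρ x ≤ ρ ζ + e') :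
    ∀ s : ℝ, 0 < s → s ≤ δ →
      ENNReal.ofReal ((ρ ζ - e') * (2*s)) ≤ μ (Metric.ball ζ s) ∧
      μ (Metric.ball ζ s) ≤ ENNReal.ofReal ((ρ ζ + e') * (2*s)) := by
  intro s hs hsδ
  have hmeas : MeasurableSet (Metric.ball ζ s) := measurableSet_ball
  have happ : μ (Metric.ball ζ s) = ∫⁻ x in Metric.ball ζ s, ENNReal.ofReal (ρ x) := by
    rw [hρ, withDensity_apply _ hmeas]
  have hsubδ : Metric.ball ζ s ⊆ Metric.ball ζ δ := Metric.ball_subset_ball hsδ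
  have hvol : MeasureTheory.volume (Metric.ball ζ s) = ENNReal.ofReal (2*s) := by
    rw [Real.volume_ball]
  constructor
  · have h1 : ∫⁻ _x in Metric.ball ζ s, ENNReal.ofReal (ρ ζ - e') ≤
        ∫⁻ x in Metric.ball ζ s, ENNReal.ofReal (ρ x) := by
      refine lintegral_mono_ae ((ae_restrict_iff' hmeas).2 (ae_of_all _ fun x hx => ?_))
      exact ENNReal.ofReal_le_ofReal (hbd x (hsubδ hx)).1
    rw [happ, ENNReal.ofReal_mul hpos, ← hvol]
    calc ENNReal.ofReal (ρ ζ - e') * MeasureTheory.volume (Metric.ball ζ s)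
        = ∫⁻ _x in Metric.ball ζ s, ENNReal.ofReal (ρ ζ - e') := by rw [setLIntegral_const]
      _ ≤ _ := h1
  · have h1 : ∫⁻ x in Metric.ball ζ s, ENNReal.ofReal (ρ x) ≤
        ∫⁻ _x in Metric.ball ζ s, ENNReal.ofReal (ρ ζ + e') := by
      refine lintegral_mono_ae ((ae_restrict_iff' hmeas).2 (ae_of_all _ fun x hx => ?_))
      exact ENNReal.ofReal_le_ofReal (hbd x (hsubδ hx)).2
    rw [happ, ENNReal.ofReal_mul (by linarith), ← hvol]
    calc ∫⁻ x in Metric.ball ζ s, ENNReal.ofReal (ρ x)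
        ≤ ∫⁻ _x in Metric.ball ζ s, ENNReal.ofReal (ρ ζ + e') := h1
      _ = ENNReal.ofReal (ρ ζ + e') * MeasureTheory.volume (Metric.ball ζ s) := by
          rw [setLIntegral_const]

set_option maxHeartbeats 800000 in
lemma ratio_bounds (T : ℝ → ℝ) (p k : ℕ) (ζ : ℝ) (μ : Measure ℝ) [IsProbabilityMeasure μ]
    (lam e e' rho δ : ℝ)
    (he : 0 < e) (helam : 1 < lam - e) (he' : 0 < e') (he'rho : e' < rho) (hδ : 0 < δ)
    (hlow : ∀ x ∈ Metric.ball ζ δ, (lam - e) * |x - ζ| ≤ |T^[p] x - ζ|)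
    (hup : ∀ x ∈ Metric.ball ζ δ, |T^[p] x - ζ| ≤ (lam + e) * |x - ζ|)
    (hμlow : ∀ s : ℝ, 0 < s → s ≤ δ → ENNReal.ofReal ((rho - e') * (2*s)) ≤ μ (Metric.ball ζ s))
    (hμup : ∀ s : ℝ, 0 < s → s ≤ δ → μ (Metric.ball ζ s) ≤ ENNReal.ofReal ((rho + e') * (2*s)))
    (rr : ℝ) (hr : 0 < rr) (hrδ : rr ≤ δ) :
    ((lam+e)⁻¹)^k * ((rho - e')/(rho + e')) - ((lam-e)⁻¹)^(k+1) * ((rho + e')/(rho - e')) ≤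
      (μ (Qann T p (Metric.ball ζ rr) k)).toReal / (μ (Metric.ball ζ rr)).toReal ∧
    (μ (Qann T p (Metric.ball ζ rr) k)).toReal / (μ (Metric.ball ζ rr)).toReal ≤
      ((lam-e)⁻¹)^k * ((rho + e')/(rho - e')) - ((lam+e)⁻¹)^(k+1) * ((rho - e')/(rho + e')) := by
  have hlam1 : 1 < lam + e := by linarith
  have hlam0 : 0 < lam - e := by linarith
  have hrho1 : 0 < rho - e' := by linarith
  have hrho2 : 0 < rho + e' := by linarith
  set B := Metric.ball ζ rr with hB
  set a : ℝ := rr * ((lam-e)⁻¹)^k with ha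
  set b : ℝ := rr * ((lam+e)⁻¹)^(k+1) with hb
  set a' : ℝ := rr * ((lam+e)⁻¹)^k with ha'
  set b' : ℝ := rr * ((lam-e)⁻¹)^(k+1) with hb'
  have hpowle : ∀ (c : ℝ), 1 < c → ∀ j : ℕ, (c⁻¹)^j ≤ 1 := fun c hc j =>
    pow_le_one₀ (inv_nonneg.2 (by linarith)) (inv_le_one_of_one_le₀ hc.le)
  have hpowpos : ∀ (c : ℝ), 1 < c → ∀ j : ℕ, 0 < (c⁻¹)^j := fun c hc j =>
    pow_pos (inv_pos.2 (by linarith)) j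
  have hapos : 0 < a := mul_pos hr (hpowpos _ helam k)
  have hbpos : 0 < b := mul_pos hr (hpowpos _ hlam1 (k+1))
  have ha'pos : 0 < a' := mul_pos hr (hpowpos _ hlam1 k)
  have hb'pos : 0 < b' := mul_pos hr (hpowpos _ helam (k+1))
  have hale : a ≤ rr := by
    calc a ≤ rr * 1 := mul_le_mul_of_nonneg_left (hpowle _ helam k) hr.le
      _ = rr := mul_one rr
  have hble : b ≤ rr := by
    calc b ≤ rr * 1 := mul_le_mul_of_nonneg_left (hpowle _ hlam1 (k+1)) hr.le
      _ = rr := mul_one rr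
  have ha'le : a' ≤ rr := by
    calc a' ≤ rr * 1 := mul_le_mul_of_nonneg_left (hpowle _ hlam1 k) hr.le
      _ = rr := mul_one rr
  have hb'le : b' ≤ rr := by
    calc b' ≤ rr * 1 := mul_le_mul_of_nonneg_left (hpowle _ helam (k+1)) hr.le
      _ = rr := mul_one rr
  have hUa : Uset T p B k ⊆ Metric.ball ζ a :=
    Uset_subset_ball T p ζ δ rr (lam-e) hlam0 hrδ hlow k
  have hUb' : Uset T p B (k+1) ⊆ Metric.ball ζ b' :=
    Uset_subset_ball T p ζ δ rr (lam-e) hlam0 hrδ hlow (k+1)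
  have hUa' : Metric.ball ζ a' ⊆ Uset T p B k :=
    ball_subset_Uset T p ζ δ rr (lam+e) hlam1.le hr.le hrδ hup k
  have hUb : Metric.ball ζ b ⊆ Uset T p B (k+1) :=
    ball_subset_Uset T p ζ δ rr (lam+e) hlam1.le hr.le hrδ hup (k+1)
  have hQ := Qann_eq_diff T p B k
  have hfin : ∀ s : Set ℝ, μ s ≠ ∞ := fun s => measure_ne_top μ s
  have hmlow : ∀ s : ℝ, 0 < s → s ≤ δ → (rho - e') * (2*s) ≤ (μ (Metric.ball ζ s)).toReal := by
    intro s hs hsδ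
    exact (ENNReal.ofReal_le_iff_le_toReal (hfin _)).1 (hμlow s hs hsδ)
  have hmup : ∀ s : ℝ, 0 < s → s ≤ δ → (μ (Metric.ball ζ s)).toReal ≤ (rho + e') * (2*s) := by
    intro s hs hsδ
    have := ENNReal.toReal_mono (ENNReal.ofReal_ne_top) (hμup s hs hsδ)
    rwa [ENNReal.toReal_ofReal (by positivity)] at this
  have hmBpos : 0 < (μ B).toReal := lt_of_lt_of_le (by positivity) (hmlow rr hr hrδ)
  have hinvnn1 : (0:ℝ) ≤ (lam-e)⁻¹ := inv_nonneg.2 hlam0.le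
  have hinvnn2 : (0:ℝ) ≤ (lam+e)⁻¹ := inv_nonneg.2 (by linarith)
  have hbk : ((lam+e)⁻¹:ℝ)^(k+1) ≤ ((lam-e)⁻¹)^k := by
    calc ((lam+e)⁻¹:ℝ)^(k+1) ≤ ((lam-e)⁻¹)^(k+1) := by
          apply pow_le_pow_left₀ hinvnn2
          exact inv_anti₀ hlam0 (by linarith)
      _ ≤ ((lam-e)⁻¹)^k :=
          pow_le_pow_of_le_one hinvnn1 (inv_le_one_of_one_le₀ helam.le) (Nat.le_succ k)
  have hba : b ≤ a := mul_le_mul_of_nonneg_left hbk hr.le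
  have hdisj : Disjoint (Qann T p B k) (Metric.ball ζ b) := by
    rw [hQ, Set.disjoint_left]
    intro x hx hxb
    exact hx.2 (hUb hxb)
  have hsub1 : Qann T p B k ∪ Metric.ball ζ b ⊆ Metric.ball ζ a := by
    refine Set.union_subset ?_ (Metric.ball_subset_ball hba)
    rw [hQ]; exact (Set.diff_subset).trans hUa
  have hup1 : μ (Qann T p B k) + μ (Metric.ball ζ b) ≤ μ (Metric.ball ζ a) := by
    rw [← measure_union hdisj measurableSet_ball]
    exact measure_mono hsub1
  have hupR : (μ (Qann T p B k)).toReal + (μ (Metric.ball ζ b)).toReal ≤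
      (μ (Metric.ball ζ a)).toReal := by
    have := ENNReal.toReal_mono (hfin _) hup1
    rwa [ENNReal.toReal_add (hfin _) (hfin _)] at this
  have hsub2 : Metric.ball ζ a' ⊆ Qann T p B k ∪ Metric.ball ζ b' := by
    intro x hx
    by_cases hxb : x ∈ Metric.ball ζ b'
    · exact Or.inr hxb
    · left
      rw [hQ]
      exact ⟨hUa' hx, fun hxU => hxb (hUb' hxU)⟩
  have hlow1 : μ (Metric.ball ζ a') ≤ μ (Qann T p B k) + μ (Metric.ball ζ b') :=
    le_trans (measure_mono hsub2) (measure_union_le _ _)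
  have hlowR : (μ (Metric.ball ζ a')).toReal ≤
      (μ (Qann T p B k)).toReal + (μ (Metric.ball ζ b')).toReal := by
    have := ENNReal.toReal_mono (ENNReal.add_ne_top.2 ⟨hfin _, hfin _⟩) hlow1
    rwa [ENNReal.toReal_add (hfin _) (hfin _)] at this
  have hmBup : (μ B).toReal ≤ (rho + e') * (2*rr) := hmup rr hr hrδ
  have hmBlow : (rho - e') * (2*rr) ≤ (μ B).toReal := hmlow rr hr hrδ
  constructor
  · have h1 : ((lam+e)⁻¹)^k * ((rho - e')/(rho + e')) ≤
        (μ (Metric.ball ζ a')).toReal / (μ B).toReal := by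
      have := div_le_div₀ (ENNReal.toReal_nonneg)
        (hmlow a' ha'pos (ha'le.trans hrδ)) hmBpos hmBup
      refine le_trans (le_of_eq ?_) this
      rw [ha']
      field_simp
    have h2 : (μ (Metric.ball ζ b')).toReal / (μ B).toReal ≤
        ((lam-e)⁻¹)^(k+1) * ((rho + e')/(rho - e')) := by
      have := div_le_div₀ (by positivity)
        (hmup b' hb'pos (hb'le.trans hrδ)) (by positivity : (0:ℝ) < (rho - e') * (2*rr)) hmBlow
      refine le_trans this (le_of_eq ?_)
      rw [hb']
      field_simp
    have h3 : (μ (Metric.ball ζ a')).toReal / (μ B).toReal -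
        (μ (Metric.ball ζ b')).toReal / (μ B).toReal ≤
        (μ (Qann T p B k)).toReal / (μ B).toReal := by
      rw [div_sub_div_same]
      exact (div_le_div_iff_of_pos_right hmBpos).2 (by linarith)
    calc ((lam+e)⁻¹)^k * ((rho - e')/(rho + e')) - ((lam-e)⁻¹)^(k+1) * ((rho + e')/(rho - e'))
        ≤ (μ (Metric.ball ζ a')).toReal / (μ B).toReal -
          (μ (Metric.ball ζ b')).toReal / (μ B).toReal := sub_le_sub h1 h2
      _ ≤ _ := h3
  · have h1 : (μ (Metric.ball ζ a)).toReal / (μ B).toReal ≤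
        ((lam-e)⁻¹)^k * ((rho + e')/(rho - e')) := by
      have := div_le_div₀ (by positivity)
        (hmup a hapos (hale.trans hrδ)) (by positivity : (0:ℝ) < (rho - e') * (2*rr)) hmBlow
      refine le_trans this (le_of_eq ?_)
      rw [ha]
      field_simp
    have h2 : ((lam+e)⁻¹)^(k+1) * ((rho - e')/(rho + e')) ≤
        (μ (Metric.ball ζ b)).toReal / (μ B).toReal := by
      have := div_le_div₀ (ENNReal.toReal_nonneg)
        (hmlow b hbpos (hble.trans hrδ)) hmBpos hmBup
      refine le_trans (le_of_eq ?_) this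
      rw [hb]
      field_simp
    have h3 : (μ (Qann T p B k)).toReal / (μ B).toReal ≤
        (μ (Metric.ball ζ a)).toReal / (μ B).toReal -
        (μ (Metric.ball ζ b)).toReal / (μ B).toReal := by
      rw [div_sub_div_same]
      exact (div_le_div_iff_of_pos_right hmBpos).2 (by linarith)
    calc (μ (Qann T p B k)).toReal / (μ B).toReal
        ≤ (μ (Metric.ball ζ a)).toReal / (μ B).toReal -
          (μ (Metric.ball ζ b)).toReal / (μ B).toReal := h3
      _ ≤ _ := sub_le_sub h1 h2

end Aux

set_option maxHeartbeats 1600000 in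
/-- Let `T : I → I` be Borel measurable on a compact interval
`I = [l, u]`, `ζ` a periodic point of period `p` at which `T^p` is locally a `C¹`
diffeomorphism with `|(T^p)'(ζ)| > 1`, and `μ` a `T`-invariant absolutely continuous Borel
probability measure whose density is continuous and positive at `ζ`. With
`θ = 1 - |(T^p)'(ζ)|⁻¹`, for shrinking balls `B_n` around `ζ` one has
`μ(Q_k(B_n))/μ(B_n) → θ (1-θ)^k` for every `k ≥ 0`; in particular the extremal index
`lim μ(Q(B_n))/μ(B_n)` equals `θ`. -/
theorem statement10 (T : ℝ → ℝ) (hTmeas : Measurable T)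
    (l u : ℝ) (hlu : l < u) (hmap : Set.MapsTo T (Set.Icc l u) (Set.Icc l u))
    (ζ : ℝ) (hζI : ζ ∈ Set.Icc l u)
    (p : ℕ) (hp : 1 ≤ p) (hper : T^[p] ζ = ζ)
    (U : Set ℝ) (hU : IsOpen U) (hζU : ζ ∈ U)
    (hC1 : ContDiffOn ℝ 1 (T^[p]) U) (hinj : Set.InjOn (T^[p]) U)
    (hd : ∀ x ∈ U, deriv (T^[p]) x ≠ 0) (hexp : 1 < |deriv (T^[p]) ζ|)
    (μ : Measure ℝ) [IsProbabilityMeasure μ] (hinv : MeasurePreserving T μ μ)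
    (hsupp : μ (Set.Icc l u)ᶜ = 0)
    (ρ : ℝ → ℝ) (hρ : μ = MeasureTheory.volume.withDensity (fun x => ENNReal.ofReal (ρ x)))
    (hρcont : ContinuousAt ρ ζ) (hρpos : 0 < ρ ζ)
    (r : ℕ → ℝ) (hrpos : ∀ n, 0 < r n) (hr0 : Tendsto r atTop (𝓝 0)) :
    (∀ k : ℕ, Tendsto
      (fun n => μ (Qann T p (Metric.ball ζ (r n)) k) / μ (Metric.ball ζ (r n))) atTop
      (𝓝 (ENNReal.ofReal
        ((1 - |deriv (T^[p]) ζ|⁻¹) * (|deriv (T^[p]) ζ|⁻¹) ^ k)))) ∧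
    Tendsto (fun n => μ (Qann T p (Metric.ball ζ (r n)) 0) / μ (Metric.ball ζ (r n))) atTop
      (𝓝 (ENNReal.ofReal (1 - |deriv (T^[p]) ζ|⁻¹))) := by
  set lam : ℝ := |deriv (T^[p]) ζ| with hlamdef
  have hlam : 1 < lam := hexp
  have hρne : ρ ζ ≠ 0 := hρpos.ne'
  -- continuity of |deriv (T^[p])| at ζ
  have hcd : ContinuousAt (deriv (T^[p])) ζ :=
    (hC1.continuousOn_deriv_of_isOpen hU le_rfl).continuousAt (hU.mem_nhds hζU)
  have habs : ContinuousAt (fun x => |deriv (T^[p]) x|) ζ := hcd.abs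
  -- key eventual bounds
  have key : ∀ (k : ℕ) (e e' : ℝ), 0 < e → 1 < lam - e → 0 < e' → e' < ρ ζ →
      ∀ᶠ n in atTop,
        ((lam+e)⁻¹)^k * ((ρ ζ - e')/(ρ ζ + e')) -
          ((lam-e)⁻¹)^(k+1) * ((ρ ζ + e')/(ρ ζ - e')) ≤
          (μ (Qann T p (Metric.ball ζ (r n)) k)).toReal / (μ (Metric.ball ζ (r n))).toReal ∧
        (μ (Qann T p (Metric.ball ζ (r n)) k)).toReal / (μ (Metric.ball ζ (r n))).toReal ≤
          ((lam-e)⁻¹)^k * ((ρ ζ + e')/(ρ ζ - e')) -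
          ((lam+e)⁻¹)^(k+1) * ((ρ ζ - e')/(ρ ζ + e')) := by
    intro k e e' he helam he' he'ρ
    have hev1 : ∀ᶠ x in 𝓝 ζ, dist (|deriv (T^[p]) x|) lam < e :=
      Metric.tendsto_nhds.1 habs e he
    have hev2 : ∀ᶠ x in 𝓝 ζ, x ∈ U := eventually_of_mem (hU.mem_nhds hζU) (fun x hx => hx)
    have hev3 : ∀ᶠ x in 𝓝 ζ, dist (ρ x) (ρ ζ) < e' := Metric.tendsto_nhds.1 hρcont e' he'
    obtain ⟨δ, hδpos, hδprop⟩ := Metric.eventually_nhds_iff.1 ((hev1.and hev2).and hev3)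
    have hball : ∀ x ∈ Metric.ball ζ δ,
        (dist (|deriv (T^[p]) x|) lam < e ∧ x ∈ U) ∧ dist (ρ x) (ρ ζ) < e' :=
      fun x hx => hδprop (Metric.mem_ball.1 hx)
    have hdiff : ∀ x ∈ Metric.ball ζ δ, DifferentiableAt ℝ (T^[p]) x := by
      intro x hx
      have hxU : x ∈ U := (hball x hx).1.2
      exact ((hC1.differentiableOn one_ne_zero) x hxU).differentiableAt (hU.mem_nhds hxU)
    have hlow : ∀ x ∈ Metric.ball ζ δ, (lam - e) * |x - ζ| ≤ |T^[p] x - ζ| := by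
      refine mvt_lower (T^[p]) ζ δ hper hdiff (lam - e) (fun x hx => ?_)
      have := (hball x hx).1.1
      rw [Real.dist_eq] at this
      have := abs_lt.1 this
      linarith [this.1]
    have hup : ∀ x ∈ Metric.ball ζ δ, |T^[p] x - ζ| ≤ (lam + e) * |x - ζ| := by
      intro x hx
      have hbound : ∀ y ∈ Metric.ball ζ δ, ‖deriv (T^[p]) y‖ ≤ lam + e := by
        intro y hy
        have := (hball y hy).1.1
        rw [Real.dist_eq] at this
        have := abs_lt.1 this
        rw [Real.norm_eq_abs]
        linarith [this.2]
      have := Convex.norm_image_sub_le_of_norm_deriv_le hdiff hbound (convex_ball ζ δ)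
        (Metric.mem_ball_self hδpos) hx
      rw [hper] at this
      simpa [Real.norm_eq_abs] using this
    have hbdρ : ∀ x ∈ Metric.ball ζ δ, ρ ζ - e' ≤ ρ x ∧ ρ x ≤ ρ ζ + e' := by
      intro x hx
      have := (hball x hx).2
      rw [Real.dist_eq] at this
      have := abs_lt.1 this
      constructor <;> linarith [this.1, this.2]
    have hdens := density_bounds μ ρ hρ ζ δ e' he'.le (by linarith) hbdρ
    have hμlow : ∀ s : ℝ, 0 < s → s ≤ δ →
        ENNReal.ofReal ((ρ ζ - e') * (2*s)) ≤ μ (Metric.ball ζ s) :=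
      fun s hs hsδ => (hdens s hs hsδ).1
    have hμup : ∀ s : ℝ, 0 < s → s ≤ δ →
        μ (Metric.ball ζ s) ≤ ENNReal.ofReal ((ρ ζ + e') * (2*s)) :=
      fun s hs hsδ => (hdens s hs hsδ).2
    filter_upwards [hr0.eventually (gt_mem_nhds hδpos)] with n hn
    exact ratio_bounds T p k ζ μ lam e e' (ρ ζ) δ he helam he' he'ρ hδpos
      hlow hup hμlow hμup (r n) (hrpos n) hn.le
  -- real-valued limits
  have hreal : ∀ k : ℕ, Tendsto
      (fun n => (μ (Qann T p (Metric.ball ζ (r n)) k)).toReal /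
        (μ (Metric.ball ζ (r n))).toReal) atTop
      (𝓝 ((1 - lam⁻¹) * (lam⁻¹) ^ k)) := by
    intro k
    set f : ℕ → ℝ := fun n => (μ (Qann T p (Metric.ball ζ (r n)) k)).toReal /
      (μ (Metric.ball ζ (r n))).toReal with hf
    set ε : ℕ → ℝ := fun m => min ((lam - 1)/2) (min (ρ ζ / 2) (1/(m+1))) with hε
    have hεpos : ∀ m, 0 < ε m := fun m =>
      lt_min (by linarith) (lt_min (by linarith) (by positivity))
    have hε1 : ∀ m, 1 < lam - ε m := fun m => by
      have := min_le_left ((lam - 1)/2) (min (ρ ζ / 2) (1/(m+1)))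
      have h2 : ε m ≤ (lam - 1)/2 := this
      linarith
    have hε2 : ∀ m, ε m < ρ ζ := fun m => by
      have h2 : ε m ≤ ρ ζ / 2 := le_trans (min_le_right _ _) (min_le_left _ _)
      linarith
    have hεto : Tendsto ε atTop (𝓝 0) := by
      apply squeeze_zero (fun m => (hεpos m).le)
        (fun m => le_trans (min_le_right _ _) (min_le_right _ _))
      exact tendsto_one_div_add_atTop_nhds_zero_nat
    -- limits of the bounding sequences
    have hsubto : Tendsto (fun m => lam - ε m) atTop (𝓝 lam) := by
      have := tendsto_const_nhds.sub hεto (f := fun _ : ℕ => lam)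
      simpa using this
    have haddto : Tendsto (fun m => lam + ε m) atTop (𝓝 lam) := by
      have := tendsto_const_nhds.add hεto (f := fun _ : ℕ => lam)
      simpa using this
    have hρsub : Tendsto (fun m => ρ ζ - ε m) atTop (𝓝 (ρ ζ)) := by
      have := tendsto_const_nhds.sub hεto (f := fun _ : ℕ => ρ ζ)
      simpa using this
    have hρadd : Tendsto (fun m => ρ ζ + ε m) atTop (𝓝 (ρ ζ)) := by
      have := tendsto_const_nhds.add hεto (f := fun _ : ℕ => ρ ζ)
      simpa using this
    have hlamne : lam ≠ 0 := by positivity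
    have hq1 : Tendsto (fun m => (ρ ζ + ε m)/(ρ ζ - ε m)) atTop (𝓝 1) := by
      have := hρadd.div hρsub hρne
      rwa [div_self hρne] at this
    have hq2 : Tendsto (fun m => (ρ ζ - ε m)/(ρ ζ + ε m)) atTop (𝓝 1) := by
      have := hρsub.div hρadd hρne
      rwa [div_self hρne] at this
    have hp1 : Tendsto (fun m => ((lam - ε m)⁻¹)^k) atTop (𝓝 ((lam⁻¹)^k)) :=
      (hsubto.inv₀ hlamne).pow k
    have hp2 : Tendsto (fun m => ((lam + ε m)⁻¹)^(k+1)) atTop (𝓝 ((lam⁻¹)^(k+1))) :=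
      (haddto.inv₀ hlamne).pow (k+1)
    have hp3 : Tendsto (fun m => ((lam + ε m)⁻¹)^k) atTop (𝓝 ((lam⁻¹)^k)) :=
      (haddto.inv₀ hlamne).pow k
    have hp4 : Tendsto (fun m => ((lam - ε m)⁻¹)^(k+1)) atTop (𝓝 ((lam⁻¹)^(k+1))) :=
      (hsubto.inv₀ hlamne).pow (k+1)
    have hLtarget : (lam⁻¹)^k * 1 - (lam⁻¹)^(k+1) * 1 = (1 - lam⁻¹) * (lam⁻¹)^k := by ring
    have hUbto : Tendsto (fun m => ((lam - ε m)⁻¹)^k * ((ρ ζ + ε m)/(ρ ζ - ε m)) -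
        ((lam + ε m)⁻¹)^(k+1) * ((ρ ζ - ε m)/(ρ ζ + ε m))) atTop
        (𝓝 ((1 - lam⁻¹) * (lam⁻¹)^k)) := by
      have := (hp1.mul hq1).sub (hp2.mul hq2)
      rwa [hLtarget] at this
    have hLbto : Tendsto (fun m => ((lam + ε m)⁻¹)^k * ((ρ ζ - ε m)/(ρ ζ + ε m)) -
        ((lam - ε m)⁻¹)^(k+1) * ((ρ ζ + ε m)/(ρ ζ - ε m))) atTop
        (𝓝 ((1 - lam⁻¹) * (lam⁻¹)^k)) := by
      have := (hp3.mul hq2).sub (hp4.mul hq1)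
      rwa [hLtarget] at this
    -- boundedness
    have hfnonneg : ∀ n, 0 ≤ f n := fun n => by positivity
    have hbddbelow : IsBoundedUnder (· ≥ ·) atTop f :=
      isBoundedUnder_of_eventually_ge (Eventually.of_forall hfnonneg)
    have hbddabove : IsBoundedUnder (· ≤ ·) atTop f := by
      refine isBoundedUnder_of_eventually_le
        (a := ((lam - ε 0)⁻¹)^k * ((ρ ζ + ε 0)/(ρ ζ - ε 0)) -
          ((lam + ε 0)⁻¹)^(k+1) * ((ρ ζ - ε 0)/(ρ ζ + ε 0))) ?_
      exact (key k (ε 0) (ε 0) (hεpos 0) (hε1 0) (hεpos 0) (hε2 0)).mono fun n hn => hn.2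
    have hlimsup : limsup f atTop ≤ (1 - lam⁻¹) * (lam⁻¹)^k := by
      refine ge_of_tendsto hUbto (Eventually.of_forall fun m => ?_)
      exact limsup_le_of_le hbddbelow.isCoboundedUnder_le
        ((key k (ε m) (ε m) (hεpos m) (hε1 m) (hεpos m) (hε2 m)).mono fun n hn => hn.2)
    have hliminf : (1 - lam⁻¹) * (lam⁻¹)^k ≤ liminf f atTop := by
      refine le_of_tendsto hLbto (Eventually.of_forall fun m => ?_)
      exact le_liminf_of_le hbddabove.isCoboundedUnder_ge
        ((key k (ε m) (ε m) (hεpos m) (hε1 m) (hεpos m) (hε2 m)).mono fun n hn => hn.1)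
    exact tendsto_of_le_liminf_of_limsup_le hliminf hlimsup hbddabove hbddbelow
  -- μ(B_n) is eventually nonzero
  have hBne : ∀ᶠ n in atTop, μ (Metric.ball ζ (r n)) ≠ 0 := by
    have hev3 : ∀ᶠ x in 𝓝 ζ, dist (ρ x) (ρ ζ) < ρ ζ / 2 :=
      Metric.tendsto_nhds.1 hρcont (ρ ζ / 2) (by positivity)
    obtain ⟨δ, hδpos, hδprop⟩ := Metric.eventually_nhds_iff.1 hev3
    have hbdρ : ∀ x ∈ Metric.ball ζ δ, ρ ζ - ρ ζ / 2 ≤ ρ x ∧ ρ x ≤ ρ ζ + ρ ζ / 2 := by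
      intro x hx
      have := hδprop (Metric.mem_ball.1 hx)
      rw [Real.dist_eq] at this
      have := abs_lt.1 this
      constructor <;> linarith [this.1, this.2]
    have hdens := density_bounds μ ρ hρ ζ δ (ρ ζ / 2) (by positivity) (by linarith) hbdρ
    filter_upwards [hr0.eventually (gt_mem_nhds hδpos)] with n hn
    have := (hdens (r n) (hrpos n) hn.le).1
    have hpos : (0:ℝ≥0∞) < ENNReal.ofReal ((ρ ζ - ρ ζ / 2) * (2 * r n)) := by
      rw [ENNReal.ofReal_pos]
      have := hrpos n
      nlinarith
    exact (lt_of_lt_of_le hpos this).ne'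
  -- conversion to ℝ≥0∞
  have hconv : ∀ k : ℕ, Tendsto
      (fun n => μ (Qann T p (Metric.ball ζ (r n)) k) / μ (Metric.ball ζ (r n))) atTop
      (𝓝 (ENNReal.ofReal ((1 - lam⁻¹) * (lam⁻¹) ^ k))) := by
    intro k
    have h1 : Tendsto (fun n => ENNReal.ofReal
        ((μ (Qann T p (Metric.ball ζ (r n)) k)).toReal / (μ (Metric.ball ζ (r n))).toReal))
        atTop (𝓝 (ENNReal.ofReal ((1 - lam⁻¹) * (lam⁻¹) ^ k))) :=
      (ENNReal.continuous_ofReal.tendsto _).comp (hreal k)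
    refine Tendsto.congr' ?_ h1
    filter_upwards [hBne] with n hn
    rw [← ENNReal.toReal_div, ENNReal.ofReal_toReal]
    exact (ENNReal.div_lt_top (measure_ne_top μ _) hn).ne
  exact ⟨hconv, by simpa using hconv 0⟩
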